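/- Let H be a nontrivial complex Hilbert space and let T be a unitary operator on H. Suppose that for every real number θ there exists a unitary operator U_θ on H with U_θ⁻¹ ∘ T ∘ U_θ = e^{iθ} • T. Then the spectrum of T equals the full unit circle {z ∈ ℂ : |z| = 1}. -/

import Mathlib

/-- If a unitary operator `T` on a nontrivial complex Hilbert space is, for every
`θ ∈ ℝ`, unitarily conjugate to `e^{iθ} • T`, then its spectrum is the whole
unit circle. -/
theorem stmt2 {H : Type*} [NormedAddCommGroup H] [InnerProductSpace ℂ H]
    [CompleteSpace H] [Nontrivial H]
    (T : H →L[ℂ] H) (hT : T ∈ unitary (H →L[ℂ] H))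
    (h : ∀ θ : ℝ, ∃ U : H ≃ₗᵢ[ℂ] H,
      ∀ x : H, U.symm (T (U x)) = Complex.exp (θ * Complex.I) • T x) :
    spectrum ℂ T = {z : ℂ | ‖z‖ = 1} := by
  -- rotation invariance of the spectrum
  have key : ∀ θ : ℝ, spectrum ℂ (Complex.exp (θ * Complex.I) • T) = spectrum ℂ T := by
    intro θ
    obtain ⟨U, hU⟩ := h θ
    set u : (H →L[ℂ] H)ˣ := U.toContinuousLinearEquiv.toUnit with hu
    have hEq : (↑u⁻¹ : H →L[ℂ] H) * T * (u : H →L[ℂ] H)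
        = Complex.exp (θ * Complex.I) • T := by
      ext x
      exact hU x
    rw [← hEq, spectrum.units_conjugate']
  have hsub : spectrum ℂ T ⊆ {z : ℂ | ‖z‖ = 1} := by
    intro z hz
    simpa using spectrum.subset_circle_of_unitary hT hz
  obtain ⟨z₀, hz₀⟩ := spectrum.nonempty T
  have hz₀n : ‖z₀‖ = 1 := hsub hz₀
  refine le_antisymm hsub ?_
  intro w hw
  have hwn : ‖w‖ = 1 := hw
  -- w = exp(θ i) * z₀ for θ = arg (w / z₀)
  have hz₀ne : z₀ ≠ 0 := by intro h0; rw [h0] at hz₀n; simp at hz₀n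
  set c : ℂ := w / z₀ with hc
  have hcn : ‖c‖ = 1 := by
    simp [hc, norm_div, hwn, hz₀n]
  have hcexp : Complex.exp ((c.arg : ℂ) * Complex.I) = c := by
    have := Complex.norm_mul_exp_arg_mul_I c
    rwa [hcn, Complex.ofReal_one, one_mul] at this
  have : w = Complex.exp ((c.arg : ℂ) * Complex.I) * z₀ := by
    rw [hcexp, hc, div_mul_cancel₀ _ hz₀ne]
  rw [this]
  have := (key c.arg).symm ▸ hz₀
  have hmem : Complex.exp ((c.arg : ℂ) * Complex.I) * z₀ ∈
      spectrum ℂ (Complex.exp ((c.arg : ℂ) * Complex.I) • T) := by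
    have hu : IsUnit (Complex.exp ((c.arg : ℂ) * Complex.I)) :=
      (Complex.exp_ne_zero _).isUnit
    rw [← hu.unit_spec, ← Units.smul_def, spectrum.unit_smul_eq_smul]
    exact ⟨z₀, hz₀, by simp [Units.smul_def]⟩
  rwa [key] at hmem
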